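/- Let f : ℝⁿ → ℝ be Lipschitz with constant L > 0, λ > 0 and x ∈ ℝⁿ. Then the convex envelope of y ↦ f(y) + λ|y−x|² at the point x equals the local convex envelope computed only over points in the closed ball B̄_{r_λ}(x), with r_λ = (2+√2)L/λ; i.e. conv(f + λ|·−x|²)(x) = inf{Σᵢ τᵢ (f(yᵢ) + λ|yᵢ−x|²) : τᵢ ≥ 0, Στᵢ = 1, Στᵢyᵢ = x, |yᵢ−x| ≤ r_λ, i = 1,…,n+1}. -/

import Mathlib

open Filter Metric Set
open scoped Topology RealInnerProductSpace

/-- The convex envelope of `g`: pointwise supremum of convex functions below `g`. -/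
noncomputable def convEnv {E : Type*} [NormedAddCommGroup E] [NormedSpace ℝ E]
    (g : E → ℝ) (x : E) : ℝ :=
  sSup {y : ℝ | ∃ h : E → ℝ, ConvexOn ℝ Set.univ h ∧ (∀ z, h z ≤ g z) ∧ y = h x}

/-- Upper compensated convex transform. -/
noncomputable def upperT {E : Type*} [NormedAddCommGroup E] [NormedSpace ℝ E]
    (lam : ℝ) (g : E → ℝ) (x : E) : ℝ :=
  lam * ‖x‖ ^ 2 - convEnv (fun y => lam * ‖y‖ ^ 2 - g y) x

/-- Lower compensated convex transform. -/
noncomputable def lowerT {E : Type*} [NormedAddCommGroup E] [NormedSpace ℝ E]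
    (lam : ℝ) (g : E → ℝ) (x : E) : ℝ :=
  convEnv (fun y => g y + lam * ‖y‖ ^ 2) x - lam * ‖x‖ ^ 2

namespace CCLoc

variable {E : Type*} [NormedAddCommGroup E] [NormedSpace ℝ E]

def comboSet (g : E → ℝ) (z : E) : Set ℝ :=
  {v | ∃ (k : ℕ) (τ : Fin k → ℝ) (y : Fin k → E), (∀ i, 0 ≤ τ i) ∧ (∑ i, τ i) = 1 ∧
    (∑ i, τ i • y i) = z ∧ v = ∑ i, τ i * g (y i)}

lemma self_mem_comboSet (g : E → ℝ) (z : E) : g z ∈ comboSet g z :=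
  ⟨1, fun _ => 1, fun _ => z, fun _ => zero_le_one, by simp, by simp, by simp⟩

lemma comboSet_lb {g : E → ℝ} {C : ℝ} (hg : ∀ y, C ≤ g y) {z : E} {v : ℝ}
    (hv : v ∈ comboSet g z) : C ≤ v := by
  obtain ⟨k, τ, y, hτ, h1, -, rfl⟩ := hv
  calc C = ∑ i, τ i * C := by rw [← Finset.sum_mul, h1, one_mul]
  _ ≤ ∑ i, τ i * g (y i) := Finset.sum_le_sum fun i _ => mul_le_mul_of_nonneg_left (hg _) (hτ i)

lemma bddBelow_comboSet {g : E → ℝ} {C : ℝ} (hg : ∀ y, C ≤ g y) (z : E) :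
    BddBelow (comboSet g z) := ⟨C, fun _ hv => comboSet_lb hg hv⟩

noncomputable def mhat (g : E → ℝ) (z : E) : ℝ := sInf (comboSet g z)

lemma mhat_le {g : E → ℝ} {C : ℝ} (hg : ∀ y, C ≤ g y) (z : E) : mhat g z ≤ g z :=
  csInf_le (bddBelow_comboSet hg z) (self_mem_comboSet g z)

lemma le_mhat {g : E → ℝ} {C : ℝ} (hg : ∀ y, C ≤ g y) (z : E) : C ≤ mhat g z :=
  le_csInf ⟨g z, self_mem_comboSet g z⟩ fun _ hv => comboSet_lb hg hv

lemma mhat_convexOn {g : E → ℝ} {C : ℝ} (hg : ∀ y, C ≤ g y) :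
    ConvexOn ℝ univ (mhat g) := by
  refine ⟨convex_univ, fun z₁ _ z₂ _ a b ha hb hab => ?_⟩
  have key : ∀ v₁ ∈ comboSet g z₁, ∀ v₂ ∈ comboSet g z₂,
      mhat g (a • z₁ + b • z₂) ≤ a * v₁ + b * v₂ := by
    rintro v₁ ⟨k₁, τ₁, y₁, hτ₁, hs₁, hc₁, rfl⟩ v₂ ⟨k₂, τ₂, y₂, hτ₂, hs₂, hc₂, rfl⟩
    refine csInf_le (bddBelow_comboSet hg _)
      ⟨k₁ + k₂, Fin.append (fun i => a * τ₁ i) (fun i => b * τ₂ i), Fin.append y₁ y₂,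
        ?_, ?_, ?_, ?_⟩
    · intro i
      refine Fin.addCases (fun j => ?_) (fun j => ?_) i
      · rw [Fin.append_left]; exact mul_nonneg ha (hτ₁ j)
      · rw [Fin.append_right]; exact mul_nonneg hb (hτ₂ j)
    · rw [Fin.sum_univ_add]
      simp only [Fin.append_left, Fin.append_right]
      rw [← Finset.mul_sum, ← Finset.mul_sum, hs₁, hs₂, mul_one, mul_one]; exact hab
    · rw [Fin.sum_univ_add]
      simp only [Fin.append_left, Fin.append_right, mul_smul]
      rw [← Finset.smul_sum, ← Finset.smul_sum, hc₁, hc₂]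
    · rw [Fin.sum_univ_add]
      simp only [Fin.append_left, Fin.append_right, mul_assoc]
      rw [← Finset.mul_sum, ← Finset.mul_sum]
  have hA : (comboSet g z₁).Nonempty := ⟨g z₁, self_mem_comboSet g z₁⟩
  have hB : (comboSet g z₂).Nonempty := ⟨g z₂, self_mem_comboSet g z₂⟩
  rcases eq_or_lt_of_le ha with ha0 | ha
  · have hb1 : b = 1 := by linarith
    simp only [← ha0, hb1, zero_smul, one_smul, zero_add, smul_eq_mul, zero_mul, one_mul]
    exact le_refl _
  rcases eq_or_lt_of_le hb with hb0 | hb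
  · have ha1 : a = 1 := by linarith
    simp only [← hb0, ha1, zero_smul, one_smul, add_zero, smul_eq_mul, zero_mul, one_mul]
    exact le_refl _
  · have h2 : ∀ v₁ ∈ comboSet g z₁, mhat g (a • z₁ + b • z₂) ≤ a * v₁ + b * mhat g z₂ := by
      intro v₁ hv₁
      have h : (mhat g (a • z₁ + b • z₂) - a * v₁) / b ≤ mhat g z₂ :=
        le_csInf hB fun v₂ hv₂ => by
          rw [div_le_iff₀ hb]; nlinarith [key v₁ hv₁ v₂ hv₂]
      rw [div_le_iff₀ hb] at h; linarith
    have h3 : (mhat g (a • z₁ + b • z₂) - b * mhat g z₂) / a ≤ mhat g z₁ :=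
      le_csInf hA fun v₁ hv₁ => by rw [div_le_iff₀ ha]; linarith [h2 v₁ hv₁]
    rw [div_le_iff₀ ha] at h3
    simp only [smul_eq_mul]; linarith

lemma convex_le_comboSet {g h : E → ℝ} (hconv : ConvexOn ℝ univ h) (hle : ∀ z, h z ≤ g z)
    {z : E} {v : ℝ} (hv : v ∈ comboSet g z) : h z ≤ v := by
  obtain ⟨k, τ, y, hτ, h1, hbar, rfl⟩ := hv
  calc h z = h (∑ i, τ i • y i) := by rw [hbar]
  _ ≤ ∑ i, τ i • h (y i) := hconv.map_sum_le (fun i _ => hτ i) h1 (fun i _ => mem_univ _)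
  _ ≤ ∑ i, τ i * g (y i) := Finset.sum_le_sum fun i _ => by
        rw [smul_eq_mul]; exact mul_le_mul_of_nonneg_left (hle _) (hτ i)

lemma convEnv_eq_mhat {g : E → ℝ} {C : ℝ} (hg : ∀ y, C ≤ g y) (x : E) :
    convEnv g x = mhat g x := by
  apply le_antisymm
  · refine csSup_le ⟨C, fun _ => C, convexOn_const C convex_univ, hg, rfl⟩ ?_
    rintro v ⟨h, hconv, hle, rfl⟩
    exact le_csInf ⟨g x, self_mem_comboSet g x⟩ fun w hw => convex_le_comboSet hconv hle hw
  · refine le_csSup ⟨g x, ?_⟩ ⟨mhat g, mhat_convexOn hg, fun z => mhat_le hg z, rfl⟩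
    rintro v ⟨h, hconv, hle, rfl⟩; exact hle x

lemma exists_subgradient {E : Type*} [NormedAddCommGroup E] [NormedSpace ℝ E]
    [FiniteDimensional ℝ E] (F : E → ℝ) (hF : ConvexOn ℝ Set.univ F) (x : E) :
    ∃ φ : E →L[ℝ] ℝ, ∀ y, F x + φ (y - x) ≤ F y := by
  have hcont : Continuous F := by
    have := hF.continuousOn isOpen_univ
    rw [continuousOn_univ] at this
    exact this
  have hSconv : Convex ℝ {p : E × ℝ | F p.1 < p.2} := by
    have h := hF.convex_strict_epigraph
    simpa using h
  have hSopen : IsOpen {p : E × ℝ | F p.1 < p.2} :=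
    isOpen_lt (hcont.comp continuous_fst) continuous_snd
  have hxS : ((x, F x) : E × ℝ) ∉ {p : E × ℝ | F p.1 < p.2} := by simp
  obtain ⟨Φ, hΦ⟩ := geometric_hahn_banach_open_point hSconv hSopen hxS
  set c : ℝ := Φ (0, 1) with hc
  have hdecomp : ∀ (y : E) (t : ℝ), Φ (y, t) = Φ (y, 0) + t * c := by
    intro y t
    have h : ((y, t) : E × ℝ) = (y, (0:ℝ)) + t • ((0:E), (1:ℝ)) := by
      simp [Prod.ext_iff]
    rw [h, map_add, map_smul, smul_eq_mul]
  have hcneg : c < 0 := by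
    have h1 := hΦ (x, F x + 1) (by simp)
    rw [hdecomp x (F x + 1), hdecomp x (F x)] at h1
    nlinarith
  have key : ∀ y : E, Φ (y, 0) + F y * c ≤ Φ (x, 0) + F x * c := by
    intro y
    by_contra hcon
    push_neg at hcon
    set δ : ℝ := (Φ (y, 0) + F y * c - (Φ (x, 0) + F x * c)) / (-c) with hδ
    have hδpos : 0 < δ := div_pos (by linarith) (by linarith)
    have h2 := hΦ (y, F y + δ / 2) (by simp; linarith)
    rw [hdecomp y (F y + δ / 2), hdecomp x (F x)] at h2
    have hne : (-c) ≠ 0 := by intro h; rw [show c = 0 by linarith] at hcneg; exact lt_irrefl 0 hcneg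
    have heq : δ * (-c) = Φ (y, 0) + F y * c - (Φ (x, 0) + F x * c) := by
      rw [hδ, div_mul_cancel₀ _ hne]
    nlinarith [mul_pos hδpos (show (0:ℝ) < -c by linarith)]
  refine ⟨(-c)⁻¹ • (Φ.comp (ContinuousLinearMap.inl ℝ E ℝ)), fun y => ?_⟩
  have h3 := key y
  have h4 : Φ ((y - x, 0) : E × ℝ) = Φ (y, 0) - Φ (x, 0) := by
    rw [show ((y - x, 0) : E × ℝ) = (y, 0) - (x, 0) by simp [Prod.ext_iff], map_sub]
  have h5 : ((-c)⁻¹ • (Φ.comp (ContinuousLinearMap.inl ℝ E ℝ))) (y - x)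
      = (-c)⁻¹ * (Φ (y, 0) - Φ (x, 0)) := by
    simp [ContinuousLinearMap.smul_apply, ContinuousLinearMap.comp_apply,
      ContinuousLinearMap.inl_apply, h4]
  rw [h5]
  have hcpos : 0 < -c := by linarith
  have h6 : (-c)⁻¹ * (Φ (y, 0) - Φ (x, 0)) ≤ F y - F x := by
    rw [inv_mul_le_iff₀ hcpos]
    nlinarith
  linarith

lemma pad_sum {M : Type*} [AddCommMonoid M] {k m : ℕ} (hk : k ≤ m) (F : Fin k → M) :
    ∑ i : Fin m, (if h : (i : ℕ) < k then F ⟨i, h⟩ else 0) = ∑ i : Fin k, F i := by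
  rw [Fin.sum_univ_eq_sum_range (fun j => if h : j < k then F ⟨j, h⟩ else 0) m]
  rw [← Finset.sum_subset (Finset.range_subset_range.2 hk) (fun j _ hj => by
    rw [dif_neg (by simpa using hj)])]
  rw [← Fin.sum_univ_eq_sum_range (fun j => if h : j < k then F ⟨j, h⟩ else 0) k]
  exact Finset.sum_congr rfl fun i _ => by simp [i.isLt]

lemma exists_dependence {n : ℕ} (m : ℕ) (hm : n + 1 < m) (y : Fin m → EuclideanSpace ℝ (Fin n)) :
    ∃ σ : Fin m → ℝ, σ ≠ 0 ∧ (∑ i, σ i) = 0 ∧ (∑ i, σ i • y i) = 0 := by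
  let Φ : (Fin m → ℝ) →ₗ[ℝ] (EuclideanSpace ℝ (Fin n)) × ℝ :=
    { toFun := fun σ => (∑ i, σ i • y i, ∑ i, σ i),
      map_add' := fun σ σ' => by
        simp [add_smul, Finset.sum_add_distrib, Prod.ext_iff]
      map_smul' := fun r σ => by
        simp [smul_smul, Finset.smul_sum, Prod.ext_iff, Finset.mul_sum] }
  have hnotinj : ¬ Function.Injective Φ := fun hinj => by
    have hle := LinearMap.finrank_le_finrank_of_injective hinj
    rw [Module.finrank_pi, Module.finrank_prod, finrank_euclideanSpace_fin,
        Module.finrank_self, Fintype.card_fin] at hle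
    omega
  obtain ⟨σ₁, σ₂, hΦeq, hne⟩ := Function.not_injective_iff.1 hnotinj
  have h0 : Φ (σ₁ - σ₂) = 0 := by rw [map_sub, hΦeq, sub_self]
  refine ⟨σ₁ - σ₂, sub_ne_zero.2 hne, ?_, ?_⟩
  · have := congrArg Prod.snd h0
    simpa [Φ] using this
  · have := congrArg Prod.fst h0
    simpa [Φ] using this

lemma caratheodory {n : ℕ} (g : EuclideanSpace ℝ (Fin n) → ℝ) (x : EuclideanSpace ℝ (Fin n))
    (R : ℝ) (hR : 0 ≤ R) :
    ∀ (k : ℕ) (τ : Fin k → ℝ) (y : Fin k → EuclideanSpace ℝ (Fin n)),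
      (∀ i, 0 ≤ τ i) → (∑ i, τ i) = 1 → (∑ i, τ i • y i) = x → (∀ i, ‖y i - x‖ ≤ R) →
      ∃ (τ' : Fin (n + 1) → ℝ) (y' : Fin (n + 1) → EuclideanSpace ℝ (Fin n)),
        (∀ i, 0 ≤ τ' i) ∧ (∑ i, τ' i) = 1 ∧ (∑ i, τ' i • y' i) = x ∧
        (∀ i, ‖y' i - x‖ ≤ R) ∧ (∑ i, τ' i * g (y' i)) ≤ ∑ i, τ i * g (y i) := by
  intro k
  induction k using Nat.strong_induction_on with
  | _ k IH =>
  intro τ y hτ h1 hbar hball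
  rcases le_or_gt k (n + 1) with hk | hk
  · refine ⟨fun i => if h : (i : ℕ) < k then τ ⟨i, h⟩ else 0,
            fun i => if h : (i : ℕ) < k then y ⟨i, h⟩ else x, ?_, ?_, ?_, ?_, ?_⟩
    · intro i; by_cases h : (i : ℕ) < k
      · simp only [dif_pos h]; exact hτ _
      · simp only [dif_neg h]; exact le_refl 0
    · rw [pad_sum hk τ]; exact h1
    · have hcongr : ∀ i : Fin (n + 1),
          (if h : (i : ℕ) < k then τ ⟨i, h⟩ else 0) •
            (if h : (i : ℕ) < k then y ⟨i, h⟩ else x)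
          = (if h : (i : ℕ) < k then τ ⟨i, h⟩ • y ⟨i, h⟩ else 0) := fun i => by
        by_cases h : (i : ℕ) < k <;> simp [h]
      rw [Finset.sum_congr rfl (fun i _ => hcongr i), pad_sum hk (fun i => τ i • y i)]
      exact hbar
    · intro i; by_cases h : (i : ℕ) < k
      · simp only [dif_pos h]; exact hball _
      · simp only [dif_neg h, sub_self, norm_zero]; exact hR
    · have hcongr : ∀ i : Fin (n + 1),
          (if h : (i : ℕ) < k then τ ⟨i, h⟩ else 0) *
            g (if h : (i : ℕ) < k then y ⟨i, h⟩ else x)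
          = (if h : (i : ℕ) < k then τ ⟨i, h⟩ * g (y ⟨i, h⟩) else 0) := fun i => by
        by_cases h : (i : ℕ) < k <;> simp [h]
      rw [Finset.sum_congr rfl (fun i _ => hcongr i), pad_sum hk (fun i => τ i * g (y i))]
  · obtain ⟨m, rfl⟩ : ∃ m, k = m + 1 := ⟨k - 1, by omega⟩
    obtain ⟨σ0, hσ0ne, hσ0sum, hσ0vec⟩ := exists_dependence (m + 1) (by omega) y
    obtain ⟨σ, hσne, hσsum, hσvec, hσval⟩ :
        ∃ σ : Fin (m + 1) → ℝ, σ ≠ 0 ∧ (∑ i, σ i) = 0 ∧ (∑ i, σ i • y i) = 0 ∧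
          0 ≤ ∑ i, σ i * g (y i) := by
      rcases le_or_gt 0 (∑ i, σ0 i * g (y i)) with h | h
      · exact ⟨σ0, hσ0ne, hσ0sum, hσ0vec, h⟩
      · refine ⟨-σ0, neg_ne_zero.2 hσ0ne, ?_, ?_, ?_⟩
        · simpa using hσ0sum
        · simp only [Pi.neg_apply, neg_smul, Finset.sum_neg_distrib, hσ0vec, neg_zero]
        · simp only [Pi.neg_apply, neg_mul, Finset.sum_neg_distrib]; linarith
    have hpos : ∃ i, 0 < σ i := by
      by_contra hcon
      push_neg at hcon
      have hz := (Finset.sum_eq_zero_iff_of_nonpos (fun i _ => hcon i)).1 hσsum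
      exact hσne (funext fun i => hz i (Finset.mem_univ i))
    obtain ⟨ip, hip⟩ := hpos
    have hPne : (Finset.univ.filter (fun i => 0 < σ i)).Nonempty :=
      ⟨ip, by simp [hip]⟩
    obtain ⟨i₀, hi₀P, hi₀min⟩ :=
      Finset.exists_min_image (Finset.univ.filter (fun i => 0 < σ i)) (fun i => τ i / σ i) hPne
    have hσi₀ : 0 < σ i₀ := by simpa using hi₀P
    set t := τ i₀ / σ i₀ with ht
    have ht0 : 0 ≤ t := div_nonneg (hτ i₀) hσi₀.le
    have hτ''0 : ∀ i, 0 ≤ τ i - t * σ i := by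
      intro i
      rcases le_or_gt (σ i) 0 with h | h
      · have h2 : t * σ i ≤ 0 := mul_nonpos_of_nonneg_of_nonpos ht0 h
        linarith [hτ i]
      · have hmin : t ≤ τ i / σ i := hi₀min i (by simp [h])
        rw [le_div_iff₀ h] at hmin
        linarith
    have hzero : τ i₀ - t * σ i₀ = 0 := by
      rw [ht, div_mul_cancel₀ _ (ne_of_gt hσi₀)]; ring
    have hs1 : ∑ i, (τ i - t * σ i) = 1 := by
      rw [Finset.sum_sub_distrib, ← Finset.mul_sum, hσsum, mul_zero, sub_zero, h1]
    have hs2 : ∑ i, (τ i - t * σ i) • y i = x := by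
      have hterm : ∀ i, (τ i - t * σ i) • y i = τ i • y i - t • (σ i • y i) := fun i => by
        rw [sub_smul, mul_smul]
      rw [Finset.sum_congr rfl (fun i _ => hterm i), Finset.sum_sub_distrib,
        ← Finset.smul_sum, hσvec, smul_zero, sub_zero, hbar]
    have hs3 : ∑ i, (τ i - t * σ i) * g (y i) ≤ ∑ i, τ i * g (y i) := by
      have hterm : ∀ i, (τ i - t * σ i) * g (y i) = τ i * g (y i) - t * (σ i * g (y i)) :=
        fun i => by ring
      rw [Finset.sum_congr rfl (fun i _ => hterm i), Finset.sum_sub_distrib,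
        ← Finset.mul_sum]
      nlinarith
    obtain ⟨τ', y', p1, p2, p3, p4, p5⟩ := IH m (by omega)
      (fun j => τ (i₀.succAbove j) - t * σ (i₀.succAbove j)) (fun j => y (i₀.succAbove j))
      (fun j => hτ''0 _)
      (by
        have := Fin.sum_univ_succAbove (fun i => τ i - t * σ i) i₀
        rw [hs1, hzero, zero_add] at this; exact this.symm)
      (by
        have := Fin.sum_univ_succAbove (fun i => (τ i - t * σ i) • y i) i₀
        rw [hs2, hzero, zero_smul, zero_add] at this; exact this.symm)
      (fun j => hball _)
    refine ⟨τ', y', p1, p2, p3, p4, le_trans p5 ?_⟩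
    have := Fin.sum_univ_succAbove (fun i => (τ i - t * σ i) * g (y i)) i₀
    rw [hzero, zero_mul, zero_add] at this
    rw [← this]
    exact hs3

end CCLoc

lemma CCLoc.final_arith (V M gp X B2 C0 s4R emu fxterm c e D rho a : ℝ)
    (s1 : rho * -X ≤ rho * M) (s2 : 0 ≤ (1 - rho) * X) (s3 : a * C0 ≤ a * V)
    (s4 : a * B2 ≤ s4R * B2) (s5 : X ≤ emu) (s6 : rho * V = V - a * V)
    (s7 : a * fxterm - a * C0 = a * B2) (hgpb : a * gp ≤ a * fxterm)
    (hvlt : V < c + e) (hid1 : e * D = e + s4R * B2 + emu) :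
    rho * V - rho * M + a * gp ≤ c + e * D := by linarith

set_option maxHeartbeats 2000000 in
theorem stmt_8 {n : ℕ} (f : EuclideanSpace ℝ (Fin n) → ℝ) (L : ℝ) (hL : 0 < L)
    (hf : ∀ x y, |f x - f y| ≤ L * ‖x - y‖) (lam : ℝ) (hlam : 0 < lam)
    (x : EuclideanSpace ℝ (Fin n)) :
    convEnv (fun y => f y + lam * ‖y - x‖ ^ 2) x =
      sInf {v : ℝ | ∃ (τ : Fin (n + 1) → ℝ) (y : Fin (n + 1) → EuclideanSpace ℝ (Fin n)),
        (∀ i, 0 ≤ τ i) ∧ (∑ i, τ i) = 1 ∧ (∑ i, τ i • y i) = x ∧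
        (∀ i, ‖y i - x‖ ≤ (2 + Real.sqrt 2) * L / lam) ∧
        v = ∑ i, τ i * (f (y i) + lam * ‖y i - x‖ ^ 2)} := by
  set g : EuclideanSpace ℝ (Fin n) → ℝ := fun y => f y + lam * ‖y - x‖ ^ 2 with hg
  set R : ℝ := (2 + Real.sqrt 2) * L / lam with hRdef
  set S : Set ℝ := {v : ℝ | ∃ (τ : Fin (n + 1) → ℝ) (y : Fin (n + 1) → EuclideanSpace ℝ (Fin n)),
      (∀ i, 0 ≤ τ i) ∧ (∑ i, τ i) = 1 ∧ (∑ i, τ i • y i) = x ∧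
      (∀ i, ‖y i - x‖ ≤ R) ∧ v = ∑ i, τ i * (f (y i) + lam * ‖y i - x‖ ^ 2)} with hSdef
  have hs2 : Real.sqrt 2 ^ 2 = 2 := Real.sq_sqrt (by norm_num)
  have hs2pos : 0 < Real.sqrt 2 := Real.sqrt_pos.2 (by norm_num)
  have h12 : 1 < Real.sqrt 2 := by nlinarith
  have hRpos : 0 < R := by
    rw [hRdef]
    have h0 : (0:ℝ) < 2 + Real.sqrt 2 := by positivity
    exact div_pos (mul_pos h0 hL) hlam
  have hlamR : lam * R = (2 + Real.sqrt 2) * L := by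
    rw [hRdef, mul_comm, div_mul_cancel₀ _ (ne_of_gt hlam)]
  set C₀ : ℝ := f x - L ^ 2 / (4 * lam) with hC₀def
  have hfd : ∀ y z : EuclideanSpace ℝ (Fin n), f y - f z ≤ L * ‖y - z‖ := fun y z =>
    (le_abs_self _).trans (hf y z)
  have hgx : g x = f x := by rw [hg]; simp
  have hgC₀ : ∀ y, C₀ ≤ g y := by
    intro y
    have h1 : f x - f y ≤ L * ‖y - x‖ := by
      have := (le_abs_self (f x - f y)).trans (hf x y)
      rwa [norm_sub_rev x y] at this
    have h2 : 0 ≤ ‖y - x‖ := norm_nonneg _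
    simp only [hg, hC₀def]
    nlinarith [sq_nonneg (2 * lam * ‖y - x‖ - L), hlam,
      div_mul_cancel₀ (L ^ 2) (show (4:ℝ) * lam ≠ 0 by positivity)]
  have hsum1 : ∑ i : Fin (n + 1), (if i = 0 then (1:ℝ) else 0) = 1 := by simp
  have hSfx : f x ∈ S := by
    rw [hSdef]
    refine ⟨fun i => if i = 0 then 1 else 0, fun _ => x, ?_, hsum1, ?_, ?_, ?_⟩
    · intro i; by_cases h : i = 0 <;> simp [h]
    · rw [← Finset.sum_smul, hsum1, one_smul]
    · intro i; simp only [sub_self, norm_zero]; exact hRpos.le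
    · simp
  have hSne : S.Nonempty := ⟨f x, hSfx⟩
  have hSlb : ∀ v ∈ S, C₀ ≤ v := by
    rintro v ⟨τ, y, h0, h1, -, -, rfl⟩
    calc C₀ = ∑ i, τ i * C₀ := by rw [← Finset.sum_mul, h1, one_mul]
    _ ≤ ∑ i, τ i * (f (y i) + lam * ‖y i - x‖ ^ 2) :=
      Finset.sum_le_sum fun i _ => mul_le_mul_of_nonneg_left (hgC₀ (y i)) (h0 i)
  have hSbdd : BddBelow S := ⟨C₀, fun v hv => hSlb v hv⟩
  have dir1 : convEnv g x ≤ sInf S := by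
    refine le_csInf hSne ?_
    rintro v ⟨τ, y, h0, h1, hb, -, rfl⟩
    refine csSup_le ⟨C₀, fun _ => C₀, convexOn_const C₀ convex_univ, fun z => hgC₀ z, rfl⟩ ?_
    rintro w ⟨h, hconv, hle, rfl⟩
    exact CCLoc.convex_le_comboSet hconv hle ⟨n + 1, τ, y, h0, h1, hb, by rw [hg]⟩
  have henv : convEnv g x = CCLoc.mhat g x := CCLoc.convEnv_eq_mhat hgC₀ x
  have hcle : CCLoc.mhat g x ≤ f x := by
    have := CCLoc.mhat_le hgC₀ x; rwa [hgx] at this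
  obtain ⟨φ, hφ⟩ := CCLoc.exists_subgradient (CCLoc.mhat g) (CCLoc.mhat_convexOn hgC₀) x
  set c : ℝ := CCLoc.mhat g x with hcdef
  have hceq : c = sInf (CCLoc.comboSet g x) := hcdef
  have hφg : ∀ y, c + φ (y - x) ≤ g y := fun y => le_trans (hφ y) (CCLoc.mhat_le hgC₀ y)
  have hφbound : ∀ v : EuclideanSpace ℝ (Fin n), φ v ≤ 2 * L * ‖v‖ := by
    intro v
    rcases eq_or_ne v 0 with rfl | hv
    · simp
    have hnv : 0 < ‖v‖ := norm_pos_iff.2 hv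
    have hs : (0:ℝ) < L / (2 * lam) := by positivity
    have h1 := hφg (x + ((L / (2 * lam)) / ‖v‖) • v)
    have hnorm : ‖(x + ((L / (2 * lam)) / ‖v‖) • v) - x‖ = L / (2 * lam) := by
      rw [add_sub_cancel_left, norm_smul, Real.norm_eq_abs, abs_of_pos (div_pos hs hnv),
        div_mul_cancel₀ _ (ne_of_gt hnv)]
    have hfb : f (x + ((L / (2 * lam)) / ‖v‖) • v) - f x ≤ L * (L / (2 * lam)) := by
      have h2 := hfd (x + ((L / (2 * lam)) / ‖v‖) • v) x
      rwa [hnorm] at h2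
    have hφv : φ ((x + ((L / (2 * lam)) / ‖v‖) • v) - x) = ((L / (2 * lam)) / ‖v‖) * φ v := by
      rw [add_sub_cancel_left, map_smul, smul_eq_mul]
    rw [hφv] at h1
    simp only [hg] at h1
    rw [hnorm] at h1
    have hcge : C₀ ≤ c := CCLoc.le_mhat hgC₀ x
    rw [hC₀def] at hcge
    have hid1 : lam * (L / (2 * lam)) ^ 2 = L ^ 2 / (4 * lam) := by
      field_simp; ring
    have hid2 : L * (L / (2 * lam)) = L ^ 2 / (2 * lam) := by ring
    have hid3 : L ^ 2 / (4 * lam) + L ^ 2 / (2 * lam) + L ^ 2 / (4 * lam) = L ^ 2 / lam := by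
      field_simp; ring
    rw [hid1] at h1
    rw [hid2] at hfb
    have key : (L / (2 * lam)) / ‖v‖ * φ v ≤ L ^ 2 / lam := by linarith
    have h7 : (L / (2 * lam)) / ‖v‖ * φ v = (L / (2 * lam)) * φ v / ‖v‖ := by ring
    rw [h7, div_le_iff₀ hnv] at key
    have h8 : L / (2 * lam) * φ v = L * φ v / (2 * lam) := by ring
    rw [h8, div_le_iff₀ (by positivity : (0:ℝ) < 2 * lam)] at key
    have h9 : L ^ 2 / lam * ‖v‖ * (2 * lam) = 2 * L ^ 2 * ‖v‖ := by
      field_simp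
    rw [h9] at key
    nlinarith
  set μ : ℝ := lam * R ^ 2 - 3 * L * R with hμdef
  set κ : ℝ := 2 * lam * R - 3 * L with hκdef
  have hμpos : 0 < μ := by
    rw [hμdef]
    have h1 : lam * R ^ 2 = ((2 + Real.sqrt 2) * L) * R := by rw [← hlamR]; ring
    rw [h1]
    have h2 : 0 < L * R * (Real.sqrt 2 - 1) :=
      mul_pos (mul_pos hL hRpos) (by linarith)
    nlinarith [h2]
  have hκpos : 0 < κ := by
    rw [hκdef]
    have h1 : 2 * lam * R = 2 * ((2 + Real.sqrt 2) * L) := by rw [← hlamR]; ring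
    rw [h1]
    have h2 : 0 < (1 + 2 * Real.sqrt 2) * L := mul_pos (by linarith) hL
    linarith
  have hψlow : ∀ y : EuclideanSpace ℝ (Fin n),
      lam * ‖y - x‖ ^ 2 - 3 * L * ‖y - x‖ ≤ g y - c - φ (y - x) := by
    intro y
    have h1 : f x - f y ≤ L * ‖y - x‖ := by
      have := (le_abs_self (f x - f y)).trans (hf x y)
      rwa [norm_sub_rev x y] at this
    have h2 := hφbound (y - x)
    simp only [hg]
    linarith
  have hfarψ : ∀ y : EuclideanSpace ℝ (Fin n), R ≤ ‖y - x‖ →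
      μ + κ * (‖y - x‖ - R) ≤ g y - c - φ (y - x) := by
    intro y hy
    have h1 := hψlow y
    have h3 := mul_nonneg hlam.le (sq_nonneg (‖y - x‖ - R))
    rw [hμdef, hκdef]
    have hid : (lam * R ^ 2 - 3 * L * R) + (2 * lam * R - 3 * L) * (‖y - x‖ - R)
        + lam * (‖y - x‖ - R) ^ 2 = lam * ‖y - x‖ ^ 2 - 3 * L * ‖y - x‖ := by ring
    linarith [h1, h3, hid]
  set B₂ : ℝ := L * R + lam * R ^ 2 + L ^ 2 / (4 * lam) with hB₂def
  have hB₂pos : 0 < B₂ := by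
    rw [hB₂def]
    have : (0:ℝ) < L * R := mul_pos hL hRpos
    have : (0:ℝ) < lam * R ^ 2 := by positivity
    have : (0:ℝ) < L ^ 2 / (4 * lam) := by positivity
    linarith
  set D : ℝ := 1 + (1 / κ + R / μ) * B₂ / R + L ^ 2 / (4 * lam * μ) with hDdef
  have hDpos : 0 < D := by
    rw [hDdef]
    have h1 : 0 < 1 / κ := by positivity
    have h2 : 0 < R / μ := div_pos hRpos hμpos
    have h3 : 0 < (1 / κ + R / μ) * B₂ / R := div_pos (mul_pos (by linarith) hB₂pos) hRpos
    have h4 : 0 < L ^ 2 / (4 * lam * μ) := by positivity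
    linarith
  have hmain : ∀ ε : ℝ, 0 < ε → sInf S ≤ c + ε * D := by
    intro ε hε
    obtain ⟨v, hvmem, hvlt⟩ := exists_lt_of_csInf_lt ⟨g x, CCLoc.self_mem_comboSet g x⟩
      (show sInf (CCLoc.comboSet g x) < c + ε by rw [← hceq]; exact lt_add_of_pos_right c hε)
    obtain ⟨k, τ, y, hτ0, hτ1, hbar, rfl⟩ := hvmem
    set Fs : Finset (Fin k) := Finset.univ.filter (fun i => R < ‖y i - x‖) with hFsdef
    set σT : ℝ := ∑ i ∈ Fs, τ i with hσTdef
    set w : EuclideanSpace ℝ (Fin n) := ∑ i ∈ Fs, τ i • (y i - x) with hwdef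
    have hψ0 : ∀ i, 0 ≤ g (y i) - c - φ (y i - x) := fun i => by
      have := hφg (y i); linarith
    have hsum0 : ∑ i, τ i • (y i - x) = 0 := by
      have hterm : ∀ i : Fin k, τ i • (y i - x) = τ i • y i - τ i • x := fun i => smul_sub _ _ _
      rw [Finset.sum_congr rfl (fun i _ => hterm i), Finset.sum_sub_distrib, hbar,
        ← Finset.sum_smul, hτ1, one_smul, sub_self]
    have hφ0 : ∑ i, τ i * φ (y i - x) = 0 := by
      have hterm : ∀ i : Fin k, τ i * φ (y i - x) = φ (τ i • (y i - x)) := fun i => by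
        rw [map_smul, smul_eq_mul]
      rw [Finset.sum_congr rfl (fun i _ => hterm i), ← map_sum, hsum0, map_zero]
    have hψtot : ∑ i, τ i * (g (y i) - c - φ (y i - x)) < ε := by
      have hterm : ∀ i : Fin k, τ i * (g (y i) - c - φ (y i - x))
          = τ i * g (y i) - τ i * c - τ i * φ (y i - x) := fun i => by ring
      rw [Finset.sum_congr rfl (fun i _ => hterm i), Finset.sum_sub_distrib,
        Finset.sum_sub_distrib, ← Finset.sum_mul, hτ1, one_mul, hφ0, sub_zero]
      linarith
    have hτψ0 : ∀ i, 0 ≤ τ i * (g (y i) - c - φ (y i - x)) := fun i =>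
      mul_nonneg (hτ0 i) (hψ0 i)
    have hFssub : ∑ i ∈ Fs, τ i * (g (y i) - c - φ (y i - x)) < ε :=
      lt_of_le_of_lt (Finset.sum_le_sum_of_subset_of_nonneg (Finset.subset_univ Fs)
        (fun i _ _ => hτψ0 i)) hψtot
    have hfar : ∀ i ∈ Fs, R ≤ ‖y i - x‖ := fun i hi => by
      have h : R < ‖y i - x‖ := by
        rw [hFsdef] at hi
        simpa using hi
      exact h.le
    have hσTbound : σT * μ ≤ ε := by
      have h1 : ∑ i ∈ Fs, τ i * μ ≤ ∑ i ∈ Fs, τ i * (g (y i) - c - φ (y i - x)) := by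
        refine Finset.sum_le_sum fun i hi => mul_le_mul_of_nonneg_left ?_ (hτ0 i)
        have h2 := hfarψ (y i) (hfar i hi)
        linarith [mul_nonneg hκpos.le (sub_nonneg.2 (hfar i hi))]
      rw [← Finset.sum_mul] at h1
      rw [hσTdef]
      linarith
    have hmombound : κ * (∑ i ∈ Fs, τ i * (‖y i - x‖ - R)) ≤ ε := by
      have h1 : ∀ i ∈ Fs, κ * (τ i * (‖y i - x‖ - R)) ≤ τ i * (g (y i) - c - φ (y i - x)) := by
        intro i hi
        have h2 := hfarψ (y i) (hfar i hi)
        have h4 := mul_le_mul_of_nonneg_left h2 (hτ0 i)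
        have h5 : 0 ≤ τ i * μ := mul_nonneg (hτ0 i) hμpos.le
        have h6 : τ i * (μ + κ * (‖y i - x‖ - R)) = τ i * μ + κ * (τ i * (‖y i - x‖ - R)) := by
          ring
        linarith [h4, h5, h6]
      calc κ * (∑ i ∈ Fs, τ i * (‖y i - x‖ - R))
          = ∑ i ∈ Fs, κ * (τ i * (‖y i - x‖ - R)) := by rw [Finset.mul_sum]
      _ ≤ ∑ i ∈ Fs, τ i * (g (y i) - c - φ (y i - x)) := Finset.sum_le_sum h1
      _ ≤ ε := hFssub.le
    have hσ0 : 0 ≤ σT := Finset.sum_nonneg fun i _ => hτ0 i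
    have hσ5 : σT ≤ ε / μ := by rw [le_div_iff₀ hμpos]; linarith
    have hwnorm : ‖w‖ ≤ ε / κ + R * (ε / μ) := by
      have h1 : ‖w‖ ≤ ∑ i ∈ Fs, ‖τ i • (y i - x)‖ := by
        rw [hwdef]; exact norm_sum_le _ _
      have h2 : ∀ i ∈ Fs, ‖τ i • (y i - x)‖ = τ i * ‖y i - x‖ := fun i _ => by
        rw [norm_smul, Real.norm_eq_abs, abs_of_nonneg (hτ0 i)]
      have h3 : ∑ i ∈ Fs, τ i * ‖y i - x‖
          = ∑ i ∈ Fs, τ i * (‖y i - x‖ - R) + σT * R := by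
        rw [hσTdef, Finset.sum_mul, ← Finset.sum_add_distrib]
        exact Finset.sum_congr rfl fun i _ => by ring
      have h4 : ∑ i ∈ Fs, τ i * (‖y i - x‖ - R) ≤ ε / κ := by
        rw [le_div_iff₀ hκpos]; linarith
      have h5 : σT * R ≤ (ε / μ) * R := mul_le_mul_of_nonneg_right hσ5 hRpos.le
      calc ‖w‖ ≤ ∑ i ∈ Fs, ‖τ i • (y i - x)‖ := h1
      _ = ∑ i ∈ Fs, τ i * ‖y i - x‖ := Finset.sum_congr rfl h2
      _ = ∑ i ∈ Fs, τ i * (‖y i - x‖ - R) + σT * R := h3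
      _ ≤ ε / κ + (ε / μ) * R := by linarith
      _ = ε / κ + R * (ε / μ) := by ring
    set ρ : ℝ := R / (R + ‖w‖) with hρdef
    set a : ℝ := ‖w‖ / (R + ‖w‖) with hadef
    have hRw : 0 < R + ‖w‖ := by
      have := norm_nonneg w; linarith
    have hρpos : 0 < ρ := div_pos hRpos hRw
    have hρle1 : ρ ≤ 1 := by
      rw [hρdef, div_le_one hRw]
      have := norm_nonneg w; linarith
    have ha0 : 0 ≤ a := div_nonneg (norm_nonneg w) hRw.le
    have hρa : ρ + a = 1 := by
      rw [hρdef, hadef, ← add_div, div_self (ne_of_gt hRw)]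
    have hale : a ≤ ‖w‖ / R := by
      rw [hadef, div_le_div_iff₀ hRw hRpos]
      have h1 : 0 ≤ ‖w‖ * ‖w‖ := mul_self_nonneg _
      have h2 : ‖w‖ * (R + ‖w‖) = ‖w‖ * R + ‖w‖ * ‖w‖ := by ring
      linarith [h1, h2]
    set p : EuclideanSpace ℝ (Fin n) := x + (R / ‖w‖) • w with hpdef
    have hpnorm : ‖p - x‖ ≤ R := by
      rw [hpdef, add_sub_cancel_left, norm_smul, Real.norm_eq_abs]
      rcases eq_or_ne w 0 with h | h
      · rw [h]; simp; exact hRpos.le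
      · have hnw : 0 < ‖w‖ := norm_pos_iff.2 h
        rw [abs_of_nonneg (div_nonneg hRpos.le hnw.le), div_mul_cancel₀ _ (ne_of_gt hnw)]
    have hpmom : a • ((R / ‖w‖) • w) = ρ • w := by
      rcases eq_or_ne w 0 with h | h
      · rw [h]; simp
      · have hnw : 0 < ‖w‖ := norm_pos_iff.2 h
        rw [smul_smul]
        congr 1
        rw [hadef, hρdef]
        field_simp
    set τ' : Fin (k + 1) → ℝ := Fin.snoc (fun i => ρ * τ i) a with hτ'def
    set y' : Fin (k + 1) → EuclideanSpace ℝ (Fin n) :=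
      Fin.snoc (fun i => if R < ‖y i - x‖ then x else y i) p with hy'def
    have hτ'0 : ∀ i, 0 ≤ τ' i := by
      intro i
      refine Fin.lastCases ?_ (fun j => ?_) i
      · rw [hτ'def]; simp only [Fin.snoc_last]; exact ha0
      · rw [hτ'def]; simp only [Fin.snoc_castSucc]; exact mul_nonneg hρpos.le (hτ0 j)
    have hτ'1 : ∑ i, τ' i = 1 := by
      rw [hτ'def, Fin.sum_univ_castSucc]
      simp only [Fin.snoc_castSucc, Fin.snoc_last]
      rw [← Finset.mul_sum, hτ1, mul_one]
      exact hρa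
    have hwfilter : w = ∑ i, (if R < ‖y i - x‖ then τ i • (y i - x) else 0) := by
      rw [hwdef, hFsdef, Finset.sum_filter]
    have hbar' : ∑ i, τ' i • y' i = x := by
      rw [hτ'def, hy'def, Fin.sum_univ_castSucc]
      simp only [Fin.snoc_castSucc, Fin.snoc_last]
      have hterm : ∀ i : Fin k, (ρ * τ i) • (if R < ‖y i - x‖ then x else y i)
          = ρ • (τ i • y i) - ρ • (if R < ‖y i - x‖ then τ i • (y i - x) else 0) := by
        intro i
        by_cases h : R < ‖y i - x‖
        · simp only [if_pos h, mul_smul, smul_sub]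
          abel
        · simp only [if_neg h, mul_smul, smul_zero, sub_zero]
      rw [Finset.sum_congr rfl (fun i _ => hterm i), Finset.sum_sub_distrib,
        ← Finset.smul_sum, ← Finset.smul_sum, hbar, ← hwfilter, hpdef, smul_add, hpmom]
      have h2 : ρ • x - ρ • w + (a • x + ρ • w) = ρ • x + a • x := by abel
      rw [h2, ← add_smul, hρa, one_smul]
    have hball' : ∀ i, ‖y' i - x‖ ≤ R := by
      intro i
      refine Fin.lastCases ?_ (fun j => ?_) i
      · rw [hy'def]; simp only [Fin.snoc_last]; exact hpnorm
      · rw [hy'def]; simp only [Fin.snoc_castSucc]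
        by_cases h : R < ‖y j - x‖
        · simp only [if_pos h, sub_self, norm_zero]; exact hRpos.le
        · simp only [if_neg h]; linarith [not_lt.1 h]
    have hgp : g p ≤ f x + L * R + lam * R ^ 2 := by
      have h1 : f p - f x ≤ L * ‖p - x‖ := hfd p x
      have h2 : 0 ≤ ‖p - x‖ := norm_nonneg _
      simp only [hg]
      have h3 := mul_le_mul_of_nonneg_left hpnorm hL.le
      have h4 := mul_le_mul_of_nonneg_left (mul_self_le_mul_self h2 hpnorm) hlam.le
      have h5 : lam * (‖p - x‖ * ‖p - x‖) = lam * ‖p - x‖ ^ 2 := by ring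
      have h6 : lam * (R * R) = lam * R ^ 2 := by ring
      linarith [h1, h3, h4, h5, h6]
    have hvC₀ : C₀ ≤ ∑ i, τ i * g (y i) :=
      CCLoc.comboSet_lb hgC₀ ⟨k, τ, y, hτ0, hτ1, hbar, rfl⟩
    have hval : ∑ i, τ' i * g (y' i) ≤ c + ε * D := by
      have hX : (0:ℝ) ≤ L ^ 2 / (4 * lam) := by positivity
      have hmid : -(σT * (L ^ 2 / (4 * lam))) ≤ ∑ i ∈ Fs, τ i * (g (y i) - f x) := by
        have h1 : ∀ i ∈ Fs, τ i * (-(L ^ 2 / (4 * lam))) ≤ τ i * (g (y i) - f x) := by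
          intro i _
          refine mul_le_mul_of_nonneg_left ?_ (hτ0 i)
          have h := hgC₀ (y i)
          rw [hC₀def] at h
          linarith
        have h2 := Finset.sum_le_sum h1
        rw [← Finset.sum_mul] at h2
        rw [hσTdef]
        linarith
      have hterm2 : ∀ i : Fin k, (ρ * τ i) * g (if R < ‖y i - x‖ then x else y i)
          = ρ * (τ i * g (y i)) - ρ * (if R < ‖y i - x‖ then τ i * (g (y i) - f x) else 0) := by
        intro i
        by_cases h : R < ‖y i - x‖
        · simp only [if_pos h, hgx]; ring
        · simp only [if_neg h]; ring
      have s1 := mul_le_mul_of_nonneg_left hmid hρpos.le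
      have s2 : 0 ≤ (1 - ρ) * (σT * (L ^ 2 / (4 * lam))) :=
        mul_nonneg (by linarith) (mul_nonneg hσ0 hX)
      have s3 : a * C₀ ≤ a * (∑ i, τ i * g (y i)) := mul_le_mul_of_nonneg_left hvC₀ ha0
      have s4 : a * B₂ ≤ (ε / κ + R * (ε / μ)) / R * B₂ := by
        have h41 : a ≤ (ε / κ + R * (ε / μ)) / R := by
          refine le_trans hale ?_
          gcongr
        exact mul_le_mul_of_nonneg_right h41 hB₂pos.le
      have s5 : σT * (L ^ 2 / (4 * lam)) ≤ (ε / μ) * (L ^ 2 / (4 * lam)) :=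
        mul_le_mul_of_nonneg_right hσ5 hX
      have s6 : ρ * (∑ i, τ i * g (y i)) = (∑ i, τ i * g (y i)) - a * (∑ i, τ i * g (y i)) := by
        have : ρ = 1 - a := by linarith
        rw [this]; ring
      have s7 : a * (f x + L * R + lam * R ^ 2) - a * C₀ = a * B₂ := by
        rw [hB₂def, hC₀def]; ring
      have hgpb : a * g p ≤ a * (f x + L * R + lam * R ^ 2) :=
        mul_le_mul_of_nonneg_left hgp ha0
      have hid1 : ε * D = ε + (ε / κ + R * (ε / μ)) / R * B₂ + (ε / μ) * (L ^ 2 / (4 * lam)) := by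
        rw [hDdef]; field_simp
      rw [hτ'def, hy'def, Fin.sum_univ_castSucc]
      simp only [Fin.snoc_castSucc, Fin.snoc_last]
      rw [Finset.sum_congr rfl (fun i _ => hterm2 i), Finset.sum_sub_distrib,
        ← Finset.mul_sum, ← Finset.mul_sum, ← Finset.sum_filter, ← hFsdef]
      exact CCLoc.final_arith _ _ _ _ _ _ _ _ _ _ _ _ _ _ s1 s2 s3 s4 s5 s6 s7 hgpb hvlt hid1
    obtain ⟨τ'', y'', q1, q2, q3, q4, q5⟩ :=
      CCLoc.caratheodory g x R hRpos.le (k + 1) τ' y' hτ'0 hτ'1 hbar' hball'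
    have hmem : (∑ i, τ'' i * g (y'' i)) ∈ S := by
      rw [hSdef]
      exact ⟨τ'', y'', q1, q2, q3, q4, by rw [hg]⟩
    exact le_trans (csInf_le hSbdd hmem) (le_trans q5 hval)
  have dir2 : sInf S ≤ convEnv g x := by
    rw [henv]
    refine le_of_forall_pos_le_add fun ε hε => ?_
    have h1 := hmain (ε / D) (div_pos hε hDpos)
    have h2 : ε / D * D = ε := div_mul_cancel₀ ε (ne_of_gt hDpos)
    linarith
  exact le_antisymm dir1 dir2
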